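/- Let Λ be a Meyer-σ-field contained in another Meyer-σ-field Λ̄. If T is a Λ̄-stopping time, then there exists a partition of {T < ∞} into sets A, I ∈ F^{Λ̄}_T such that T_A (equal to T on A and ∞ off A) is a Λ̄-stopping time which is Λ-accessible, and T_I (equal to T on I and ∞ off I) is a Λ̄-stopping time which is totally Λ-inaccessible. The sets A and I are unique up to P-null sets. -/

import Mathlib

open MeasureTheory Filter Set Topology
open scoped NNReal ENNReal symmDiff Classical

noncomputable section

namespace Meyer

variable {Ω : Type*}

/-- The σ-field generated by a family of real-valued functions. -/
def genBy {α : Type*} (C : Set (α → ℝ)) : MeasurableSpace α :=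
  ⨆ f ∈ C, MeasurableSpace.comap f inferInstance

/-- A function is càdlàg: right-continuous with left limits. -/
def IsCadlag (f : ℝ≥0 → ℝ) : Prop :=
  (∀ t, Tendsto f (𝓝[≥] t) (𝓝 (f t))) ∧
  ∀ t : ℝ≥0, 0 < t → ∃ l, Tendsto f (𝓝[<] t) (𝓝 l)

/-- A Meyer-σ-field over `(Ω, mΩ)`: a σ-field on `Ω × [0,∞)` contained in the product
σ-field, generated by càdlàg processes, containing `{∅,Ω} × B([0,∞))` and stable under
stopping at deterministic times. -/
structure IsMeyer (mΩ : MeasurableSpace Ω) (Λ : MeasurableSpace (Ω × ℝ≥0)) : Prop where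
  le_prod : Λ ≤ @Prod.instMeasurableSpace Ω ℝ≥0 mΩ inferInstance
  gen_cadlag : ∃ C : Set (Ω × ℝ≥0 → ℝ),
    (∀ Z ∈ C, ∀ ω, IsCadlag fun t => Z (ω, t)) ∧ Λ = genBy C
  contains_borel : ∀ B : Set ℝ≥0, MeasurableSet B → MeasurableSet[Λ] (Set.univ ×ˢ B)
  stop_stable : ∀ Z : Ω × ℝ≥0 → ℝ, Measurable[Λ] Z → ∀ s : ℝ≥0,
    Measurable[Λ] fun p => Z (p.1, min p.2 s)

/-- A `Λ`-stopping time: `[[S,∞[[ ∈ Λ`. -/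
def IsStoppingTimeM (Λ : MeasurableSpace (Ω × ℝ≥0)) (S : Ω → ℝ≥0∞) : Prop :=
  MeasurableSet[Λ] {p : Ω × ℝ≥0 | S p.1 ≤ (p.2 : ℝ≥0∞)}

/-- The associated filtration `F^Λ_t := σ(Z_t : Z Λ-measurable)`. -/
def sigmaAt (Λ : MeasurableSpace (Ω × ℝ≥0)) (t : ℝ≥0) : MeasurableSpace Ω :=
  genBy {f : Ω → ℝ | ∃ Z : Ω × ℝ≥0 → ℝ, Measurable[Λ] Z ∧ f = fun ω => Z (ω, t)}

/-- `F^Λ_∞`. -/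
def sigmaInf (Λ : MeasurableSpace (Ω × ℝ≥0)) : MeasurableSpace Ω := ⨆ t : ℝ≥0, sigmaAt Λ t

/-- A process indexed by `[0,∞]` is `Λ`-measurable if its restriction to `Ω × [0,∞)`
is `Λ`-measurable and its value at `∞` is `F^Λ_∞`-measurable. -/
def MeasurableProcessE (Λ : MeasurableSpace (Ω × ℝ≥0)) (Z : Ω × ℝ≥0∞ → ℝ) : Prop :=
  Measurable[Λ] (fun p : Ω × ℝ≥0 => Z (p.1, (p.2 : ℝ≥0∞))) ∧
  Measurable[sigmaInf Λ] fun ω => Z (ω, ∞)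

/-- `F^Λ_S := σ(Z_S : Z a Λ-measurable process on [0,∞])`. -/
def sigmaAtTime (Λ : MeasurableSpace (Ω × ℝ≥0)) (S : Ω → ℝ≥0∞) : MeasurableSpace Ω :=
  genBy {f : Ω → ℝ | ∃ Z : Ω × ℝ≥0∞ → ℝ, MeasurableProcessE Λ Z ∧ f = fun ω => Z (ω, S ω)}

/-- `S_A`: equal to `S` on `A` and `∞` off `A`. -/
def restrictST (S : Ω → ℝ≥0∞) (A : Set Ω) : Ω → ℝ≥0∞ := fun ω => if ω ∈ A then S ω else ∞

/-- Evaluation of a process indexed by `[0,∞]` at a random time. -/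
def EvalAt (Z : Ω × ℝ≥0∞ → ℝ) (S : Ω → ℝ≥0∞) : Ω → ℝ := fun ω => Z (ω, S ω)

/-- Evaluation of a process indexed by `[0,∞)` at a (finite) random time. -/
def EvalAtF (Z : Ω × ℝ≥0 → ℝ) (S : Ω → ℝ≥0∞) : Ω → ℝ := fun ω => Z (ω, (S ω).toNNReal)

/-- Adaptedness of a process to a raw filtration. -/
def Adapted' (G : ℝ≥0 → MeasurableSpace Ω) (Z : Ω × ℝ≥0 → ℝ) : Prop :=
  ∀ t, Measurable[G t] fun ω => Z (ω, t)

/-- Predictable σ-field of a filtration: generated by continuous adapted processes. -/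
def predSF (G : ℝ≥0 → MeasurableSpace Ω) : MeasurableSpace (Ω × ℝ≥0) :=
  genBy {Z | (∀ ω, Continuous fun t => Z (ω, t)) ∧ Adapted' G Z}

/-- Optional σ-field of a filtration: generated by càdlàg adapted processes. -/
def optSF (G : ℝ≥0 → MeasurableSpace Ω) : MeasurableSpace (Ω × ℝ≥0) :=
  genBy {Z | (∀ ω, IsCadlag fun t => Z (ω, t)) ∧ Adapted' G Z}

/-- Classical stopping time of a raw filtration. -/
def IsStoppingTimeCl (G : ℝ≥0 → MeasurableSpace Ω) (T : Ω → ℝ≥0∞) : Prop :=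
  ∀ t : ℝ≥0, MeasurableSet[G t] {ω | T ω ≤ (t : ℝ≥0∞)}

/-- The right-continuous filtration `F^Λ_{t+}`. -/
def FplusLambda (Λ : MeasurableSpace (Ω × ℝ≥0)) (t : ℝ≥0) : MeasurableSpace Ω :=
  ⨅ (s : ℝ≥0) (_ : t < s), sigmaAt Λ s

/-- Two processes are indistinguishable. -/
def Indistinguishable {τ : Type*} [MeasurableSpace Ω] (P : Measure Ω)
    (X Y : Ω × τ → ℝ) : Prop :=
  P {ω | ∃ t, X (ω, t) ≠ Y (ω, t)} = 0

/-- `Λ` is `P`-complete: every product-measurable process indistinguishable from a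
`Λ`-measurable process is itself `Λ`-measurable. -/
def IsPCompleteM [mΩ : MeasurableSpace Ω] (P : Measure Ω)
    (Λ : MeasurableSpace (Ω × ℝ≥0)) : Prop :=
  ∀ Z Z' : Ω × ℝ≥0 → ℝ, Measurable Z → Measurable[Λ] Z' →
    Indistinguishable P Z Z' → Measurable[Λ] Z

/-- A raw filtration satisfies the usual conditions: monotone, sub-σ-fields of `mΩ`,
right-continuous and `P`-complete. -/
def UsualConditions [mΩ : MeasurableSpace Ω] (P : Measure Ω)
    (G : ℝ≥0 → MeasurableSpace Ω) : Prop :=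
  Monotone G ∧ (∀ t, G t ≤ mΩ) ∧
  (∀ t : ℝ≥0, G t = ⨅ (s : ℝ≥0) (_ : t < s), G s) ∧
  ∀ N : Set Ω, MeasurableSet N → P N = 0 → MeasurableSet[G 0] N

variable [mΩ : MeasurableSpace Ω]

/-- `Λ`-martingale (indexed by `[0,∞]`). -/
def IsMartingaleM (P : Measure Ω) (Λ : MeasurableSpace (Ω × ℝ≥0))
    (Z : Ω × ℝ≥0∞ → ℝ) : Prop :=
  MeasurableProcessE Λ Z ∧
  (∀ S, IsStoppingTimeM Λ S → Integrable (EvalAt Z S) P) ∧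
  ∀ S T : Ω → ℝ≥0∞, IsStoppingTimeM Λ S → IsStoppingTimeM Λ T → S ≤ T →
    EvalAt Z S =ᵐ[P] P[EvalAt Z T|sigmaAtTime Λ S]

/-- `Λ`-supermartingale (indexed by `[0,∞]`). -/
def IsSupermartingaleM (P : Measure Ω) (Λ : MeasurableSpace (Ω × ℝ≥0))
    (Z : Ω × ℝ≥0∞ → ℝ) : Prop :=
  MeasurableProcessE Λ Z ∧
  (∀ S, IsStoppingTimeM Λ S → Integrable (EvalAt Z S) P) ∧
  ∀ S T : Ω → ℝ≥0∞, IsStoppingTimeM Λ S → IsStoppingTimeM Λ T → S ≤ T →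
    P[EvalAt Z T|sigmaAtTime Λ S] ≤ᵐ[P] EvalAt Z S

/-- Class `(D^Λ)` for a process: uniform integrability of `{Z_T : T ∈ S^Λ}`. -/
def ClassD (P : Measure Ω) (Λ : MeasurableSpace (Ω × ℝ≥0)) (Z : Ω × ℝ≥0∞ → ℝ) : Prop :=
  UniformIntegrable (fun S : {S : Ω → ℝ≥0∞ // IsStoppingTimeM Λ S} => EvalAt Z S.1) 1 P

/-- Class `(D^Λ)` for a system. -/
def ClassDSys (P : Measure Ω) (Λ : MeasurableSpace (Ω × ℝ≥0))
    (ZS : (Ω → ℝ≥0∞) → Ω → ℝ) : Prop :=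
  UniformIntegrable (fun S : {S : Ω → ℝ≥0∞ // IsStoppingTimeM Λ S} => ZS S.1) 1 P

/-- `pY` is a `Λ`-projection of `Y` (processes indexed by `[0,∞]`). -/
def IsProjectionE (P : Measure Ω) (Λ : MeasurableSpace (Ω × ℝ≥0))
    (Y pY : Ω × ℝ≥0∞ → ℝ) : Prop :=
  MeasurableProcessE Λ pY ∧
  ∀ S, IsStoppingTimeM Λ S → (∀ ω, S ω < ∞) →
    EvalAt pY S =ᵐ[P] P[EvalAt Y S|sigmaAtTime Λ S]

/-- `pY` is a `Λ`-projection of `Y` (processes indexed by `[0,∞)`). -/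
def IsProjectionF (P : Measure Ω) (Λ : MeasurableSpace (Ω × ℝ≥0))
    (Y pY : Ω × ℝ≥0 → ℝ) : Prop :=
  Measurable[Λ] pY ∧
  ∀ S, IsStoppingTimeM Λ S → (∀ ω, S ω < ∞) →
    EvalAtF pY S =ᵐ[P] P[EvalAtF Y S|sigmaAtTime Λ S]

/-- Right-upper-semicontinuous envelope `Z^*` (with `Z^*_∞ := Z_∞`). -/
def rightLimsup (Z : Ω × ℝ≥0∞ → ℝ) (ω : Ω) (t : ℝ≥0∞) : ℝ :=
  if t = ∞ then Z (ω, ∞)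
  else limsup (fun s : ℝ≥0 => Z (ω, (s : ℝ≥0∞))) (𝓝[>] t.toNNReal)

/-- Right-lower-semicontinuous envelope `Z_*` (with `Z_{∞*} := Z_∞`). -/
def rightLiminf (Z : Ω × ℝ≥0∞ → ℝ) (ω : Ω) (t : ℝ≥0∞) : ℝ :=
  if t = ∞ then Z (ω, ∞)
  else liminf (fun s : ℝ≥0 => Z (ω, (s : ℝ≥0∞))) (𝓝[>] t.toNNReal)

/-- Left-upper-semicontinuous envelope `*Z` (with `*Z_0 := Z_0` and
`*Z_∞ := limsup_{t↑∞} Z_t`). -/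
def leftLimsup (Z : Ω × ℝ≥0∞ → ℝ) (ω : Ω) (t : ℝ≥0∞) : ℝ :=
  if t = 0 then Z (ω, 0)
  else if t = ∞ then limsup (fun s : ℝ≥0 => Z (ω, (s : ℝ≥0∞))) atTop
  else limsup (fun s : ℝ≥0 => Z (ω, (s : ℝ≥0∞))) (𝓝[<] t.toNNReal)

/-- Left-lower-semicontinuous envelope `_*Z`. -/
def leftLiminf (Z : Ω × ℝ≥0∞ → ℝ) (ω : Ω) (t : ℝ≥0∞) : ℝ :=
  if t = 0 then Z (ω, 0)
  else if t = ∞ then liminf (fun s : ℝ≥0 => Z (ω, (s : ℝ≥0∞))) atTop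
  else liminf (fun s : ℝ≥0 => Z (ω, (s : ℝ≥0∞))) (𝓝[<] t.toNNReal)

/-- `T` is `Λ`-accessible. -/
def IsAccessibleM [mΩ2 : MeasurableSpace Ω] (P : Measure Ω)
    (Λ : MeasurableSpace (Ω × ℝ≥0)) (T : Ω → ℝ≥0∞) : Prop :=
  ∃ Tn : ℕ → Ω → ℝ≥0∞, (∀ n, IsStoppingTimeM Λ (Tn n)) ∧
    P (⋃ n, {ω | Tn n ω = T ω ∧ T ω < ∞}) = P {ω | T ω < ∞}

/-- `T` is totally `Λ`-inaccessible. -/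
def IsTotallyInaccessibleM [mΩ2 : MeasurableSpace Ω] (P : Measure Ω)
    (Λ : MeasurableSpace (Ω × ℝ≥0)) (T : Ω → ℝ≥0∞) : Prop :=
  ∀ S, IsStoppingTimeM Λ S → P {ω | S ω = T ω ∧ T ω < ∞} = 0

/-- The σ-field `G_{T-}`: generated by `G_0` and the sets `A ∩ {t < T}`, `A ∈ G_t`. -/
def sigmaPre (G : ℝ≥0 → MeasurableSpace Ω) (T : Ω → ℝ≥0∞) : MeasurableSpace Ω :=
  MeasurableSpace.generateFrom
    ({A | MeasurableSet[G 0] A} ∪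
      {A | ∃ (t : ℝ≥0) (B : Set Ω), MeasurableSet[G t] B ∧ A = B ∩ {ω | (t : ℝ≥0∞) < T ω}})

/-- The σ-field `G_T` of a classical stopping time `T`. -/
def sigmaAtCl (G : ℝ≥0 → MeasurableSpace Ω) (T : Ω → ℝ≥0∞) : MeasurableSpace Ω :=
  MeasurableSpace.generateFrom
    {A | ∀ t : ℝ≥0, MeasurableSet[G t] (A ∩ {ω | T ω ≤ (t : ℝ≥0∞)})}

/-- A divided stopping time `σ = (T, W⁻, W, W⁺)`. -/
structure IsDividedST (Λ : MeasurableSpace (Ω × ℝ≥0)) (T : Ω → ℝ≥0∞)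
    (Wm W Wp : Set Ω) : Prop where
  stopping : IsStoppingTimeCl (FplusLambda Λ) T
  cover : Wm ∪ W ∪ Wp = Set.univ
  disj_mw : Wm ∩ W = ∅
  disj_mp : Wm ∩ Wp = ∅
  disj_wp : W ∩ Wp = ∅
  mem_m : MeasurableSet[sigmaPre (FplusLambda Λ) T] Wm
  m_pos : Wm ∩ {ω | T ω = 0} = ∅
  mem_w : MeasurableSet[sigmaAtTime Λ T] W
  mem_p : MeasurableSet[sigmaAtCl (FplusLambda Λ) T] Wp
  p_fin : Wp ∩ {ω | T ω = ∞} = ∅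
  pred_m : IsStoppingTimeM (predSF (FplusLambda Λ)) (restrictST T Wm)
  st_w : IsStoppingTimeM Λ (restrictST T W)

/-- The value `Z_σ` of a process at a divided stopping time. -/
def divEval (Z : Ω × ℝ≥0∞ → ℝ) (T : Ω → ℝ≥0∞) (Wm W Wp : Set Ω) : Ω → ℝ := fun ω =>
  if ω ∈ Wm then leftLimsup Z ω (T ω)
  else if ω ∈ W then Z (ω, T ω)
  else rightLimsup Z ω (T ω)

/-- `Zb` is the `Λ`-Snell envelope of the system `ZS`: a `Λ`-supermartingale which at
each `Λ`-stopping time `S` is (a version of) `ess sup_{T ∈ S^Λ, T ≥ S} E[Z(T) | F^Λ_S]`. -/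
def IsSnellSys (P : Measure Ω) (Λ : MeasurableSpace (Ω × ℝ≥0))
    (ZS : (Ω → ℝ≥0∞) → Ω → ℝ) (Zb : Ω × ℝ≥0∞ → ℝ) : Prop :=
  IsSupermartingaleM P Λ Zb ∧
  ∀ S, IsStoppingTimeM Λ S →
    (∀ T, IsStoppingTimeM Λ T → S ≤ T →
      P[ZS T|sigmaAtTime Λ S] ≤ᵐ[P] EvalAt Zb S) ∧
    ∀ U : Ω → ℝ,
      (∀ T, IsStoppingTimeM Λ T → S ≤ T → P[ZS T|sigmaAtTime Λ S] ≤ᵐ[P] U) →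
      EvalAt Zb S ≤ᵐ[P] U

/-- `Zb` is the `Λ`-Snell envelope of the process `Z`. -/
def IsSnellProc (P : Measure Ω) (Λ : MeasurableSpace (Ω × ℝ≥0))
    (Z Zb : Ω × ℝ≥0∞ → ℝ) : Prop :=
  IsSnellSys P Λ (fun S => EvalAt Z S) Zb

/-- An `S^Λ`-system. -/
def IsSystemM (P : Measure Ω) (Λ : MeasurableSpace (Ω × ℝ≥0))
    (ZS : (Ω → ℝ≥0∞) → Ω → ℝ) : Prop :=
  (∀ S T, IsStoppingTimeM Λ S → IsStoppingTimeM Λ T →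
    ∀ᵐ ω ∂P, S ω = T ω → ZS S ω = ZS T ω) ∧
  ∀ S, IsStoppingTimeM Λ S → Measurable[sigmaAtTime Λ S] (ZS S)

/-- An `S^Λ`-supermartingale system. -/
def IsSupermartingaleSystem (P : Measure Ω) (Λ : MeasurableSpace (Ω × ℝ≥0))
    (ZS : (Ω → ℝ≥0∞) → Ω → ℝ) : Prop :=
  IsSystemM P Λ ZS ∧ (∀ S, IsStoppingTimeM Λ S → Integrable (ZS S) P) ∧
  ∀ S T, IsStoppingTimeM Λ S → IsStoppingTimeM Λ T → S ≤ T →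
    P[ZS T|sigmaAtTime Λ S] ≤ᵐ[P] ZS S

/-- The process `Zb` aggregates the system `ZS`. -/
def Aggregates (P : Measure Ω) (Λ : MeasurableSpace (Ω × ℝ≥0))
    (Zb : Ω × ℝ≥0∞ → ℝ) (ZS : (Ω → ℝ≥0∞) → Ω → ℝ) : Prop :=
  ∀ S, IsStoppingTimeM Λ S → EvalAt Zb S =ᵐ[P] ZS S

/-- `pY` is the `F`-predictable projection of `Y` (with the convention `(^P Y)_∞ = 0`). -/
def IsPredProjE (P : Measure Ω) (G : ℝ≥0 → MeasurableSpace Ω)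
    (Y pY : Ω × ℝ≥0∞ → ℝ) : Prop :=
  MeasurableProcessE (predSF G) pY ∧ (∀ ω, pY (ω, ∞) = 0) ∧
  ∀ S, IsStoppingTimeM (predSF G) S → (∀ ω, S ω < ∞) →
    EvalAt pY S =ᵐ[P] P[EvalAt Y S|sigmaAtTime (predSF G) S]
section Helpers
variable {Λb : MeasurableSpace (Ω × ℝ≥0)}

lemma measurable_genBy_of_mem {α : Type*} {C : Set (α → ℝ)} {f : α → ℝ} (hf : f ∈ C) :
    Measurable[genBy C] f := by
  rw [measurable_iff_comap_le]
  exact le_iSup₂ (f := fun g (_ : g ∈ C) => MeasurableSpace.comap g inferInstance) f hf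

lemma genBy_le {α : Type*} {C : Set (α → ℝ)} {m : MeasurableSpace α}
    (h : ∀ f ∈ C, Measurable[m] f) : genBy C ≤ m :=
  iSup₂_le fun f hf => measurable_iff_comap_le.mp (h f hf)

lemma stop_set (hΛb : IsMeyer mΩ Λb) {M : Set (Ω × ℝ≥0)}
    (hM : MeasurableSet[Λb] M) (q : ℝ≥0) :
    MeasurableSet[Λb] {p : Ω × ℝ≥0 | (p.1, min p.2 q) ∈ M} := by
  have hZ : Measurable[Λb] (M.indicator (fun _ => (1:ℝ))) := measurable_const.indicator hM
  have h := hΛb.stop_stable _ hZ q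
  have he : {p : Ω × ℝ≥0 | (p.1, min p.2 q) ∈ M}
      = (fun p : Ω × ℝ≥0 => M.indicator (fun _ => (1:ℝ)) (p.1, min p.2 q)) ⁻¹' {1} := by
    ext p; by_cases hp : (p.1, min p.2 q) ∈ M <;> simp [Set.indicator_apply, hp]
  rw [he]; exact h (measurableSet_singleton 1)

lemma le_min_graph (hΛb : IsMeyer mΩ Λb) {S : Ω → ℝ≥0∞} (hS : IsStoppingTimeM Λb S)
    (q : ℝ≥0) : MeasurableSet[Λb] {p : Ω × ℝ≥0 | S p.1 ≤ ((min p.2 q : ℝ≥0) : ℝ≥0∞)} :=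
  stop_set hΛb hS q

lemma lt_graph (hΛb : IsMeyer mΩ Λb) {S : Ω → ℝ≥0∞} (hS : IsStoppingTimeM Λb S) :
    MeasurableSet[Λb] {p : Ω × ℝ≥0 | S p.1 < (p.2 : ℝ≥0∞)} := by
  have he : {p : Ω × ℝ≥0 | S p.1 < (p.2 : ℝ≥0∞)}
      = ⋃ j : ℚ, ({p : Ω × ℝ≥0 | S p.1 ≤ ((min p.2 (Real.toNNReal j) : ℝ≥0) : ℝ≥0∞)}
          ∩ Set.univ ×ˢ Set.Ioi (Real.toNNReal j)) := by
    ext ⟨ω, t⟩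
    simp only [Set.mem_setOf_eq, Set.mem_iUnion, Set.mem_inter_iff, Set.mem_prod,
      Set.mem_univ, true_and, Set.mem_Ioi]
    constructor
    · intro h
      have hS' : S ω ≠ ∞ := (h.trans_le le_top).ne -- S ω < coe t < top
      have h1 : (S ω).toReal < (t : ℝ) := by
        rw [← ENNReal.coe_toReal]
        exact ENNReal.toReal_strict_mono ENNReal.coe_ne_top h
      obtain ⟨j, hj1, hj2⟩ := exists_rat_btwn h1
      refine ⟨j, ?_, ?_⟩
      · have h2 : S ω ≤ ((Real.toNNReal j : ℝ≥0) : ℝ≥0∞) := by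
          rw [← ENNReal.ofReal_toReal hS', ← ENNReal.ofReal]
          exact ENNReal.ofReal_le_ofReal hj1.le
        exact le_min (h.le) h2 |>.trans_eq (by rw [ENNReal.coe_min])
      · have := Real.toNNReal_lt_toNNReal_iff (r := (j:ℝ)) (p := (t:ℝ))
          (lt_of_le_of_lt (ENNReal.toReal_nonneg.trans hj1.le) hj2)
        rw [Real.toNNReal_coe] at this
        exact this.2 hj2
    · rintro ⟨j, h1, h2⟩
      calc S ω ≤ ((min t (Real.toNNReal j) : ℝ≥0) : ℝ≥0∞) := h1
        _ ≤ ((Real.toNNReal j : ℝ≥0) : ℝ≥0∞) := by exact_mod_cast min_le_right _ _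
        _ < (t : ℝ≥0∞) := by exact_mod_cast h2
  rw [he]
  exact MeasurableSet.iUnion fun j => (le_min_graph hΛb hS _).inter
    (hΛb.contains_borel _ measurableSet_Ioi)


/-- A density helper: if `a < b` in `ℝ≥0∞` with `a` finite, there is a rational `j`
with `a ≤ toNNReal j < b`. -/
lemma exists_rat_btwn_ennreal {a b : ℝ≥0∞} (ha : a ≠ ∞) (hb : b ≠ ∞) (h : a < b) :
    ∃ j : ℚ, a ≤ ((Real.toNNReal j : ℝ≥0) : ℝ≥0∞) ∧ ((Real.toNNReal j : ℝ≥0) : ℝ≥0∞) < b := by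
  have h1 : a.toReal < b.toReal := ENNReal.toReal_strict_mono hb h
  obtain ⟨j, hj1, hj2⟩ := exists_rat_btwn h1
  refine ⟨j, ?_, ?_⟩
  · rw [← ENNReal.ofReal_toReal ha]
    exact ENNReal.ofReal_le_ofReal hj1.le
  · rw [← ENNReal.ofReal_toReal hb]
    exact (ENNReal.ofReal_lt_ofReal_iff_of_nonneg (ENNReal.toReal_nonneg.trans hj1.le)).2 hj2

lemma eq_graph (hΛb : IsMeyer mΩ Λb) {S T : Ω → ℝ≥0∞} (hS : IsStoppingTimeM Λb S)
    (hT : IsStoppingTimeM Λb T) :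
    MeasurableSet[Λb] {p : Ω × ℝ≥0 | S p.1 = T p.1 ∧ T p.1 ≤ (p.2 : ℝ≥0∞)} := by
  set setS := {p : Ω × ℝ≥0 | S p.1 ≤ (p.2 : ℝ≥0∞)}
  set setT := {p : Ω × ℝ≥0 | T p.1 ≤ (p.2 : ℝ≥0∞)}
  set E : (Ω → ℝ≥0∞) → ℚ → Set (Ω × ℝ≥0) :=
    fun R j => {p : Ω × ℝ≥0 | R p.1 ≤ ((min p.2 (Real.toNNReal j) : ℝ≥0) : ℝ≥0∞)}
  have key : {p : Ω × ℝ≥0 | S p.1 = T p.1 ∧ T p.1 ≤ (p.2 : ℝ≥0∞)}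
      = setS ∩ setT ∩ ⋂ j : ℚ,
          ((E S j ∩ E T j) ∪ ((setS \ E S j) ∩ (setT \ E T j))) := by
    ext ⟨ω, t⟩
    simp only [Set.mem_setOf_eq, Set.mem_inter_iff, Set.mem_iInter, Set.mem_union,
      Set.mem_diff, setS, setT, E]
    constructor
    · rintro ⟨hST, hTt⟩
      have hSt : S ω ≤ (t : ℝ≥0∞) := hST ▸ hTt
      refine ⟨⟨hSt, hTt⟩, fun j => ?_⟩
      by_cases hq : S ω ≤ ((Real.toNNReal j : ℝ≥0) : ℝ≥0∞)
      · left
        constructor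
        · rw [ENNReal.coe_min]; exact le_min hSt hq
        · rw [ENNReal.coe_min]; exact le_min hTt (hST ▸ hq)
      · right
        refine ⟨⟨hSt, fun hc => hq ?_⟩, ⟨hTt, fun hc => hq ?_⟩⟩
        · exact hc.trans (by exact_mod_cast min_le_right _ _)
        · rw [hST]; exact hc.trans (by exact_mod_cast min_le_right _ _)
    · rintro ⟨⟨hSt, hTt⟩, hall⟩
      refine ⟨?_, hTt⟩
      by_contra hne
      rcases lt_or_gt_of_ne hne with hlt | hlt
      · obtain ⟨j, hj1, hj2⟩ := exists_rat_btwn_ennreal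
          (hSt.trans_lt ENNReal.coe_lt_top).ne (hTt.trans_lt ENNReal.coe_lt_top).ne hlt
        rcases hall j with ⟨-, hTj⟩ | ⟨⟨-, hSj⟩, -⟩
        · rw [ENNReal.coe_min] at hTj
          exact absurd (hTj.trans (min_le_right _ _)) (not_le.2 hj2)
        · exact hSj (by rw [ENNReal.coe_min]; exact le_min hSt hj1)
      · obtain ⟨j, hj1, hj2⟩ := exists_rat_btwn_ennreal
          (hTt.trans_lt ENNReal.coe_lt_top).ne (hSt.trans_lt ENNReal.coe_lt_top).ne hlt
        rcases hall j with ⟨hSj, -⟩ | ⟨-, ⟨-, hTj⟩⟩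
        · rw [ENNReal.coe_min] at hSj
          exact absurd (hSj.trans (min_le_right _ _)) (not_le.2 hj2)
        · exact hTj (by rw [ENNReal.coe_min]; exact le_min hTt hj1)
  rw [key]
  exact ((hS.inter hT).inter (MeasurableSet.iInter fun j =>
    ((le_min_graph hΛb hS _).inter (le_min_graph hΛb hT _)).union
    ((hS.diff (le_min_graph hΛb hS _)).inter (hT.diff (le_min_graph hΛb hT _)))))

lemma singleton_graph (hΛb : IsMeyer mΩ Λb) {S : Ω → ℝ≥0∞} (hS : IsStoppingTimeM Λb S) :
    MeasurableSet[Λb] {p : Ω × ℝ≥0 | S p.1 = (p.2 : ℝ≥0∞)} := by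
  have he : {p : Ω × ℝ≥0 | S p.1 = (p.2 : ℝ≥0∞)}
      = {p : Ω × ℝ≥0 | S p.1 ≤ (p.2 : ℝ≥0∞)} \ {p : Ω × ℝ≥0 | S p.1 < (p.2 : ℝ≥0∞)} := by
    ext p
    simp only [Set.mem_setOf_eq, Set.mem_diff, not_lt]
    constructor
    · intro h; exact ⟨h.le, h.ge⟩
    · intro ⟨h1, h2⟩; exact le_antisymm h1 h2
  rw [he]; exact hS.diff (lt_graph hΛb hS)


/-- The key membership lemma: `{S = T < ∞} ∈ F_T`. -/
lemma mem_sigmaAtTime_eq (hΛb : IsMeyer mΩ Λb) {S T : Ω → ℝ≥0∞}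
    (hS : IsStoppingTimeM Λb S) (hT : IsStoppingTimeM Λb T) :
    MeasurableSet[sigmaAtTime Λb T] {ω | S ω = T ω ∧ T ω < ∞} := by
  classical
  set Z : Ω × ℝ≥0∞ → ℝ := fun p => if S p.1 = p.2 ∧ p.2 ≠ ∞ then 1 else 0 with hZdef
  have hZ : MeasurableProcessE Λb Z := by
    constructor
    · have he : (fun p : Ω × ℝ≥0 => Z (p.1, (p.2 : ℝ≥0∞)))
          = ({p : Ω × ℝ≥0 | S p.1 = (p.2 : ℝ≥0∞)}).indicator (fun _ => (1:ℝ)) := by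
        funext p
        by_cases hp : S p.1 = (p.2 : ℝ≥0∞) <;>
          simp [Z, hp, Set.indicator_apply]
      rw [he]
      exact measurable_const.indicator (singleton_graph hΛb hS)
    · have he : (fun ω => Z (ω, ∞)) = fun _ => (0:ℝ) := by
        funext ω; simp [Z]
      rw [he]; exact measurable_const
  have hf : Measurable[sigmaAtTime Λb T] fun ω => Z (ω, T ω) :=
    measurable_genBy_of_mem ⟨Z, hZ, rfl⟩
  have he : {ω | S ω = T ω ∧ T ω < ∞} = (fun ω => Z (ω, T ω)) ⁻¹' {1} := by
    ext ω
    by_cases h : S ω = T ω ∧ T ω ≠ ∞ <;>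
      simp [Z, h, lt_top_iff_ne_top]
  rw [he]
  exact hf (measurableSet_singleton 1)

lemma measurable_of_stopping (hΛb : IsMeyer mΩ Λb) {T : Ω → ℝ≥0∞}
    (hT : IsStoppingTimeM Λb T) : Measurable T := by
  apply measurable_of_Iic
  intro a
  rcases eq_or_ne a ∞ with rfl | ha
  · simpa using MeasurableSet.univ
  · have h1 : MeasurableSet[@Prod.instMeasurableSpace Ω ℝ≥0 mΩ inferInstance]
        {p : Ω × ℝ≥0 | T p.1 ≤ (p.2 : ℝ≥0∞)} := hΛb.le_prod _ hT
    have h2 : MeasurableSet ((fun ω => (ω, a.toNNReal)) ⁻¹' {p : Ω × ℝ≥0 | T p.1 ≤ (p.2 : ℝ≥0∞)}) :=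
      measurable_prodMk_right h1
    have he : T ⁻¹' Set.Iic a = (fun ω => (ω, a.toNNReal)) ⁻¹' {p : Ω × ℝ≥0 | T p.1 ≤ (p.2 : ℝ≥0∞)} := by
      ext ω
      simp only [Set.mem_preimage, Set.mem_Iic, Set.mem_setOf_eq]
      rw [ENNReal.coe_toNNReal ha]
    rw [he]; exact h2

lemma sigmaAt_le (hΛb : IsMeyer mΩ Λb) (t : ℝ≥0) : sigmaAt Λb t ≤ mΩ := by
  apply genBy_le
  rintro f ⟨Z, hZ, rfl⟩
  exact (hZ.mono hΛb.le_prod le_rfl).comp measurable_prodMk_right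

lemma sigmaInf_le (hΛb : IsMeyer mΩ Λb) : sigmaInf Λb ≤ mΩ :=
  iSup_le fun t => sigmaAt_le hΛb t

lemma sigmaAtTime_le (hΛb : IsMeyer mΩ Λb) {T : Ω → ℝ≥0∞}
    (hT : IsStoppingTimeM Λb T) : sigmaAtTime Λb T ≤ mΩ := by
  classical
  apply genBy_le
  rintro f ⟨Z, hZ, rfl⟩
  have hTm : Measurable T := measurable_of_stopping hΛb hT
  have hg : Measurable fun ω => Z (ω, ∞) := hZ.2.mono (sigmaInf_le hΛb) le_rfl
  have hh : Measurable fun ω => Z (ω, ((T ω).toNNReal : ℝ≥0∞)) :=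
    (hZ.1.mono hΛb.le_prod le_rfl).comp (measurable_id.prodMk hTm.ennreal_toNNReal)
  have he : (fun ω => Z (ω, T ω))
      = Set.piecewise {ω | T ω = ∞} (fun ω => Z (ω, ∞))
          (fun ω => Z (ω, ((T ω).toNNReal : ℝ≥0∞))) := by
    funext ω
    by_cases h : T ω = ∞
    · simp [Set.piecewise, h]
    · simp only [Set.piecewise, Set.mem_setOf_eq, h, if_false]
      rw [ENNReal.coe_toNNReal h]
  rw [he]
  exact Measurable.piecewise (hTm (measurableSet_singleton ∞)) hg hh


lemma restrict_fin_eq {T : Ω → ℝ≥0∞} {A : Set Ω} (hAfin : ∀ ω ∈ A, T ω < ∞) :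
    {ω | restrictST T A ω < ∞} = A := by
  ext ω
  simp only [Set.mem_setOf_eq, restrictST]
  by_cases h : ω ∈ A
  · simp [h, hAfin ω h]
  · simp [h]

lemma acc_inacc_null (P : Measure Ω) [IsFiniteMeasure P] (hΛb : IsMeyer mΩ Λb)
    {Λ : MeasurableSpace (Ω × ℝ≥0)} (hle : Λ ≤ Λb) {T : Ω → ℝ≥0∞} {A I' : Set Ω}
    (hTA : IsStoppingTimeM Λb (restrictST T A))
    (hAcc : IsAccessibleM P Λ (restrictST T A))
    (hInacc : IsTotallyInaccessibleM P Λ (restrictST T I'))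
    (hAfin : ∀ ω ∈ A, T ω < ∞) : P (A ∩ I') = 0 := by
  obtain ⟨R, hR, hPR⟩ := hAcc
  have hAeq : {ω | restrictST T A ω < ∞} = A := restrict_fin_eq hAfin
  set C := ⋃ n, {ω | R n ω = restrictST T A ω ∧ restrictST T A ω < ∞} with hC
  have hCsub : C ⊆ A := by
    rintro ω hω
    simp only [C, Set.mem_iUnion, Set.mem_setOf_eq] at hω
    obtain ⟨n, -, h2⟩ := hω
    rw [← hAeq]; exact h2
  have hCmeas : MeasurableSet C := by
    apply MeasurableSet.iUnion
    intro n
    exact sigmaAtTime_le hΛb hTA _ (mem_sigmaAtTime_eq hΛb (hle _ (hR n)) hTA)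
  have hPC : P C = P A := by rw [hPR, hAeq]
  have h1 : P (A \ C) = 0 := by
    rw [measure_diff hCsub hCmeas.nullMeasurableSet (measure_ne_top P C), hPC, tsub_self]
  have h2 : ∀ n, P {ω | R n ω = restrictST T I' ω ∧ restrictST T I' ω < ∞} = 0 :=
    fun n => hInacc _ (hR n)
  have hsub : A ∩ I' ⊆ (A \ C) ∪ ⋃ n, {ω | R n ω = restrictST T I' ω ∧ restrictST T I' ω < ∞} := by
    rintro ω ⟨hωA, hωI⟩
    by_cases hωC : ω ∈ C
    · right
      simp only [C, Set.mem_iUnion, Set.mem_setOf_eq] at hωC ⊢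
      obtain ⟨n, hn1, hn2⟩ := hωC
      have hTAω : restrictST T A ω = T ω := if_pos hωA
      have hTIω : restrictST T I' ω = T ω := if_pos hωI
      exact ⟨n, by rw [hn1, hTAω, hTIω], by rw [hTIω, ← hTAω]; exact hn2⟩
    · exact Or.inl ⟨hωA, hωC⟩
  exact measure_mono_null hsub (measure_union_null h1 (measure_iUnion_null h2))


end Helpers

/-- Decomposition of a `Λ̄`-stopping time into a `Λ`-accessible and a
totally `Λ`-inaccessible part, unique up to `P`-null sets. -/
theorem statement4 (P : Measure Ω) [IsProbabilityMeasure P] [hPc : P.IsComplete]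
    (Λ Λb : MeasurableSpace (Ω × ℝ≥0)) (hΛ : IsMeyer mΩ Λ) (hΛb : IsMeyer mΩ Λb)
    (hle : Λ ≤ Λb) (T : Ω → ℝ≥0∞) (hT : IsStoppingTimeM Λb T) :
    ∃ A I : Set Ω,
      MeasurableSet[sigmaAtTime Λb T] A ∧ MeasurableSet[sigmaAtTime Λb T] I ∧
      A ∪ I = {ω | T ω < ∞} ∧ A ∩ I = ∅ ∧
      IsStoppingTimeM Λb (restrictST T A) ∧ IsAccessibleM P Λ (restrictST T A) ∧
      IsStoppingTimeM Λb (restrictST T I) ∧ IsTotallyInaccessibleM P Λ (restrictST T I) ∧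
      ∀ A' I' : Set Ω,
        MeasurableSet[sigmaAtTime Λb T] A' → MeasurableSet[sigmaAtTime Λb T] I' →
        A' ∪ I' = {ω | T ω < ∞} → A' ∩ I' = ∅ →
        IsStoppingTimeM Λb (restrictST T A') → IsAccessibleM P Λ (restrictST T A') →
        IsStoppingTimeM Λb (restrictST T I') → IsTotallyInaccessibleM P Λ (restrictST T I') →
        P (A ∆ A') = 0 ∧ P (I ∆ I') = 0 := by
  classical
  -- the constant ∞ is a Λ-stopping time
  have hInf : IsStoppingTimeM Λ (fun _ : Ω => (∞ : ℝ≥0∞)) := by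
    have : {p : Ω × ℝ≥0 | (∞ : ℝ≥0∞) ≤ (p.2 : ℝ≥0∞)} = ∅ := by
      ext p; simp [ENNReal.coe_lt_top.not_ge]
    show MeasurableSet[Λ] _
    rw [show {p : Ω × ℝ≥0 | (fun _ : Ω => (∞:ℝ≥0∞)) p.1 ≤ (p.2 : ℝ≥0∞)} = ∅ from this]
    exact @MeasurableSet.empty _ Λ
  set Fam := {u : ℕ → Ω → ℝ≥0∞ // ∀ n, IsStoppingTimeM Λ (u n)} with hFam
  set val : (ℕ → Ω → ℝ≥0∞) → ℝ≥0∞ :=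
    fun u => P (⋃ n, {ω | u n ω = T ω ∧ T ω < ∞}) with hval
  set α := ⨆ u : Fam, val u.1 with hα
  have hαtop : α ≠ ∞ := by
    refine ne_top_of_le_ne_top ENNReal.one_ne_top (iSup_le fun u => ?_)
    exact prob_le_one
  -- selection of nearly optimal families
  have hsel : ∀ k : ℕ, ∃ u : Fam, α ≤ val u.1 + ((k : ℝ≥0∞) + 1)⁻¹ := by
    intro k
    rcases eq_or_ne α 0 with h0 | h0
    · exact ⟨⟨fun _ _ => ∞, fun _ => hInf⟩, by rw [h0]; exact zero_le⟩
    · have hε : ((k : ℝ≥0∞) + 1)⁻¹ ≠ 0 := by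
        simp [ENNReal.inv_ne_zero]
      have hlt : α - ((k : ℝ≥0∞) + 1)⁻¹ < α := ENNReal.sub_lt_self hαtop h0 hε
      rw [hα] at hlt
      obtain ⟨u, hu⟩ := lt_iSup_iff.mp hlt
      exact ⟨u, (ENNReal.lt_add_of_sub_lt_right (Or.inl hαtop) hu).le⟩
  choose u hu using hsel
  set U : ℕ → Ω → ℝ≥0∞ := fun n => (u n.unpair.1).1 n.unpair.2 with hUdef
  have hU : ∀ n, IsStoppingTimeM Λ (U n) := fun n => (u n.unpair.1).2 n.unpair.2
  set A := ⋃ n, {ω | U n ω = T ω ∧ T ω < ∞} with hA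
  have hsubk : ∀ k, (⋃ m, {ω | (u k).1 m ω = T ω ∧ T ω < ∞}) ⊆ A := by
    intro k
    refine Set.iUnion_subset fun m => ?_
    have he : {ω | (u k).1 m ω = T ω ∧ T ω < ∞}
        = {ω | U (Nat.pair k m) ω = T ω ∧ T ω < ∞} := by
      simp [hUdef, Nat.unpair_pair]
    rw [he, hA]
    exact Set.subset_iUnion (fun n => {ω | U n ω = T ω ∧ T ω < ∞}) (Nat.pair k m)
  have hPAle : ∀ k : ℕ, α ≤ P A + ((k : ℝ≥0∞) + 1)⁻¹ := fun k =>
    (hu k).trans (add_le_add_left (measure_mono (hsubk k)) _)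
  have hαA : α = P A := by
    refine le_antisymm ?_ ?_
    · refine ENNReal.le_of_forall_pos_le_add fun ε hε _ => ?_
      obtain ⟨n, hn⟩ := ENNReal.exists_inv_nat_lt (by exact_mod_cast hε.ne' : (ε : ℝ≥0∞) ≠ 0)
      refine (hPAle n).trans (add_le_add_right ?_ _)
      refine le_trans ?_ hn.le
      exact ENNReal.inv_le_inv.mpr (le_add_of_nonneg_right zero_le_one) |>.trans le_rfl
    · exact le_iSup (fun v : Fam => val v.1) ⟨U, hU⟩
  have hAfin : ∀ ω ∈ A, T ω < ∞ := by
    rintro ω hω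
    simp only [hA, Set.mem_iUnion, Set.mem_setOf_eq] at hω
    exact hω.choose_spec.2
  set I := {ω | T ω < ∞} \ A with hI
  have hIfin : ∀ ω ∈ I, T ω < ∞ := fun ω hω => hω.1
  have memA : MeasurableSet[sigmaAtTime Λb T] A :=
    MeasurableSet.iUnion fun n => mem_sigmaAtTime_eq hΛb (hle _ (hU n)) hT
  have memTfin : MeasurableSet[sigmaAtTime Λb T] {ω | T ω < ∞} := by
    have h := mem_sigmaAtTime_eq hΛb hT hT
    have he : {ω | T ω = T ω ∧ T ω < ∞} = {ω | T ω < ∞} := by ext ω; simp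
    rwa [he] at h
  have memI : MeasurableSet[sigmaAtTime Λb T] I := memTfin.diff memA
  have hmeasA : MeasurableSet A := sigmaAtTime_le hΛb hT _ memA
  have hunion : A ∪ I = {ω | T ω < ∞} := Set.union_diff_cancel fun ω hω => hAfin ω hω
  have hinter : A ∩ I = ∅ := Set.inter_diff_self _ _
  -- restrictST T A is a Λb-stopping time
  have hstA : IsStoppingTimeM Λb (restrictST T A) := by
    show MeasurableSet[Λb] _
    have he : {p : Ω × ℝ≥0 | restrictST T A p.1 ≤ (p.2 : ℝ≥0∞)}
        = ⋃ n, {p : Ω × ℝ≥0 | U n p.1 = T p.1 ∧ T p.1 ≤ (p.2 : ℝ≥0∞)} := by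
      ext ⟨ω, t⟩
      simp only [Set.mem_setOf_eq, Set.mem_iUnion]
      constructor
      · intro h
        by_cases hω : ω ∈ A
        · rw [restrictST, if_pos hω] at h
          simp only [hA, Set.mem_iUnion, Set.mem_setOf_eq] at hω
          obtain ⟨n, h1, -⟩ := hω
          exact ⟨n, h1, h⟩
        · rw [restrictST, if_neg hω] at h
          exact absurd h ENNReal.coe_lt_top.not_ge
      · rintro ⟨n, h1, h2⟩
        have hω : ω ∈ A := by
          rw [hA]
          exact Set.mem_iUnion.2 ⟨n, h1, h2.trans_lt ENNReal.coe_lt_top⟩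
        rw [restrictST, if_pos hω]
        exact h2
    rw [he]
    exact MeasurableSet.iUnion fun n => eq_graph hΛb (hle _ (hU n)) hT
  -- restrictST T A is Λ-accessible
  have haccA : IsAccessibleM P Λ (restrictST T A) := by
    refine ⟨U, hU, ?_⟩
    have h1 : {ω | restrictST T A ω < ∞} = A := restrict_fin_eq hAfin
    have h2 : (⋃ n, {ω | U n ω = restrictST T A ω ∧ restrictST T A ω < ∞}) = A := by
      ext ω
      simp only [Set.mem_iUnion, Set.mem_setOf_eq]
      constructor
      · rintro ⟨n, -, h⟩
        rw [← h1]; exact h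
      · intro hω
        have hr : restrictST T A ω = T ω := if_pos hω
        simp only [hA, Set.mem_iUnion, Set.mem_setOf_eq] at hω
        obtain ⟨n, ha, hb⟩ := hω
        exact ⟨n, by rw [hr, ha], by rw [hr]; exact hb⟩
    rw [h1, h2]
  -- restrictST T I is a Λb-stopping time
  have hstI : IsStoppingTimeM Λb (restrictST T I) := by
    show MeasurableSet[Λb] _
    have he : {p : Ω × ℝ≥0 | restrictST T I p.1 ≤ (p.2 : ℝ≥0∞)}
        = {p : Ω × ℝ≥0 | T p.1 ≤ (p.2 : ℝ≥0∞)}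
          \ ⋃ n, {p : Ω × ℝ≥0 | U n p.1 = T p.1 ∧ T p.1 ≤ (p.2 : ℝ≥0∞)} := by
      ext ⟨ω, t⟩
      simp only [Set.mem_setOf_eq, Set.mem_diff, Set.mem_iUnion, not_exists]
      constructor
      · intro h
        by_cases hω : ω ∈ I
        · rw [restrictST, if_pos hω] at h
          refine ⟨h, fun n hc => ?_⟩
          exact hω.2 (Set.mem_iUnion.2 ⟨n, hc.1, hc.2.trans_lt ENNReal.coe_lt_top⟩)
        · rw [restrictST, if_neg hω] at h
          exact absurd h ENNReal.coe_lt_top.not_ge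
      · rintro ⟨h1, h2⟩
        have hω : ω ∈ I := by
          constructor
          · exact h1.trans_lt ENNReal.coe_lt_top
          · intro hc
            simp only [hA, Set.mem_iUnion, Set.mem_setOf_eq] at hc
            obtain ⟨n, ha, -⟩ := hc
            exact h2 n ⟨ha, h1⟩
        rw [restrictST, if_pos hω]
        exact h1
    rw [he]
    exact hT.diff (MeasurableSet.iUnion fun n => eq_graph hΛb (hle _ (hU n)) hT)
  -- restrictST T I is totally Λ-inaccessible
  have hinacc : IsTotallyInaccessibleM P Λ (restrictST T I) := by
    intro S hS
    by_contra hB0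
    set B := {ω | S ω = restrictST T I ω ∧ restrictST T I ω < ∞} with hB
    have hBsubI : B ⊆ I := by
      rintro ω ⟨-, h2⟩
      rw [← restrict_fin_eq hIfin]; exact h2
    have hBeq : B = I ∩ {ω | S ω = T ω ∧ T ω < ∞} := by
      ext ω
      constructor
      · intro hω
        have hωI : ω ∈ I := hBsubI hω
        have hr : restrictST T I ω = T ω := if_pos hωI
        exact ⟨hωI, by rw [← hr]; exact hω.1, by rw [← hr]; exact hω.2⟩
      · rintro ⟨hωI, h1, h2⟩
        have hr : restrictST T I ω = T ω := if_pos hωI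
        exact ⟨by rw [hr]; exact h1, by rw [hr]; exact h2⟩
    have hBmeas : MeasurableSet B := by
      rw [hBeq]
      exact (sigmaAtTime_le hΛb hT _ memI).inter
        (sigmaAtTime_le hΛb hT _ (mem_sigmaAtTime_eq hΛb (hle _ hS) hT))
    have hdisj : Disjoint A B := by
      refine Set.disjoint_left.2 fun ω hωA hωB => ?_
      exact (hBsubI hωB).2 hωA
    set U' : ℕ → Ω → ℝ≥0∞ := fun n => if n = 0 then S else U (n - 1) with hU'def
    have hU' : ∀ n, IsStoppingTimeM Λ (U' n) := by
      intro n
      by_cases hn : n = 0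
      · simpa [hU'def, hn] using hS
      · simpa [hU'def, hn] using hU (n - 1)
    have hsub' : A ∪ B ⊆ ⋃ n, {ω | U' n ω = T ω ∧ T ω < ∞} := by
      rintro ω (hω | hω)
      · simp only [hA, Set.mem_iUnion, Set.mem_setOf_eq] at hω
        obtain ⟨m, h1, h2⟩ := hω
        refine Set.mem_iUnion.2 ⟨m + 1, ?_, h2⟩
        simpa [hU'def] using h1
      · rw [hBeq] at hω
        refine Set.mem_iUnion.2 ⟨0, ?_, hω.2.2⟩
        simpa [hU'def] using hω.2.1
    have hval' : P A + P B ≤ α := by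
      calc P A + P B = P (A ∪ B) := (measure_union hdisj hBmeas).symm
        _ ≤ val U' := measure_mono hsub'
        _ ≤ α := le_iSup (fun v : Fam => val v.1) ⟨U', hU'⟩
    have : α < α := by
      calc α = P A := hαA
        _ < P A + P B := ENNReal.lt_add_right (hαA ▸ hαtop) hB0
        _ ≤ α := hval'
    exact absurd this (lt_irrefl α)
  refine ⟨A, I, memA, memI, hunion, hinter, hstA, haccA, hstI, hinacc, ?_⟩
  -- uniqueness
  intro A' I' mA' mI' hun' hint' hstA' haccA' hstI' hinacc'
  have hA'fin : ∀ ω ∈ A', T ω < ∞ := fun ω hω => by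
    have : ω ∈ A' ∪ I' := Or.inl hω
    rw [hun'] at this; exact this
  have h1 : P (A ∩ I') = 0 := acc_inacc_null P hΛb hle hstA haccA hinacc' hAfin
  have h2 : P (A' ∩ I) = 0 := acc_inacc_null P hΛb hle hstA' haccA' hinacc hA'fin
  have hd : A ∆ A' ⊆ (A ∩ I') ∪ (A' ∩ I) := by
    intro x hx
    rw [Set.mem_symmDiff] at hx
    rcases hx with ⟨hxA, hxA'⟩ | ⟨hxA', hxA⟩
    · left
      refine ⟨hxA, ?_⟩
      have hfin : x ∈ {ω | T ω < ∞} := hAfin x hxA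
      rw [← hun'] at hfin
      exact hfin.resolve_left hxA'
    · right
      refine ⟨hxA', ⟨hA'fin x hxA', hxA⟩⟩
  have hPA : P (A ∆ A') = 0 := measure_mono_null hd (measure_union_null h1 h2)
  refine ⟨hPA, measure_mono_null ?_ hPA⟩
  intro x hx
  rw [Set.mem_symmDiff] at hx
  rw [Set.mem_symmDiff]
  rcases hx with ⟨hxI, hxI'⟩ | ⟨hxI', hxI⟩
  · right
    have hfin : x ∈ {ω | T ω < ∞} := hIfin x hxI
    rw [← hun'] at hfin
    exact ⟨hfin.resolve_right hxI', hxI.2⟩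
  · left
    have hfin : x ∈ {ω | T ω < ∞} := by
      have : x ∈ A' ∪ I' := Or.inr hxI'
      rw [hun'] at this; exact this
    have hxA : x ∈ A := by
      by_contra hc
      exact hxI ⟨hfin, hc⟩
    refine ⟨hxA, fun hc => ?_⟩
    have : x ∈ A' ∩ I' := ⟨hc, hxI'⟩
    rw [hint'] at this
    exact this


end Meyer
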